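/- Let N be a positive integer, p an integer, k an integer with 1 ≤ k ≤ N, ω = exp(2πi/N), and a = ω^(-k+1). Then the sum over i from 1 to N with i ≠ k of ω^(-p(i-1))/(1 - a·ω^(i-1)) equals ((N-1)/2 - {p})·a^{p}, where {p} = p mod N ∈ {0,...,N-1}. -/

import Mathlib

open Finset

lemma aux_zpow_modEq {ω : ℂ} {N : ℕ} (hω0 : ω ≠ 0) (hΩ : ω ^ (N : ℤ) = 1)
    {m n : ℤ} (h : m ≡ n [ZMOD (N : ℤ)]) : ω ^ m = ω ^ n := by
  obtain ⟨t, ht⟩ := h.dvd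
  have hn : n = m + (N : ℤ) * t := by linarith
  rw [hn, zpow_add₀ hω0, zpow_mul, hΩ, one_zpow, mul_one]

lemma aux_pair {z : ℂ} (h0 : z ≠ 0) (h1 : z ≠ 1) : (1-z)⁻¹ + (1 - z⁻¹)⁻¹ = 1 := by
  have hd1 : 1 - z ≠ 0 := sub_ne_zero.mpr (Ne.symm h1)
  have h2 : (1 - z⁻¹)⁻¹ = -z * (1-z)⁻¹ := by
    rw [show (1 : ℂ) - z⁻¹ = -(1-z) * z⁻¹ by field_simp; ring, mul_inv, inv_neg, inv_inv]
    ring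
  rw [h2, show ((1:ℂ)-z)⁻¹ + -z*(1-z)⁻¹ = (1-z)*(1-z)⁻¹ by ring, mul_inv_cancel₀ hd1]

lemma aux_base {N : ℕ} (hN : 0 < N) {ω : ℂ} (hω0 : ω ≠ 0)
    (hΩ : ω ^ N = 1) (hne : ∀ j : ℕ, 0 < j → j < N → ω ^ j ≠ 1) :
    ∑ j ∈ (range N).erase 0, (1 - ω ^ j)⁻¹ = ((N : ℂ) - 1) / 2 := by
  have hmem : ∀ j ∈ (range N).erase 0, 0 < j ∧ j < N := by
    intro j hj
    simp only [mem_erase, mem_range] at hj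
    omega
  have hswap : ∑ j ∈ (range N).erase 0, (1 - ω ^ j)⁻¹
      = ∑ j ∈ (range N).erase 0, (1 - ω ^ (N - j))⁻¹ := by
    apply Finset.sum_nbij' (fun j => N - j) (fun j => N - j)
    · intro j hj; obtain ⟨h1, h2⟩ := hmem j hj
      simp only [mem_erase, mem_range]; omega
    · intro j hj; obtain ⟨h1, h2⟩ := hmem j hj
      simp only [mem_erase, mem_range]; omega
    · intro j hj; obtain ⟨h1, h2⟩ := hmem j hj
      show N - (N - j) = j; omega
    · intro j hj; obtain ⟨h1, h2⟩ := hmem j hj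
      show N - (N - j) = j; omega
    · intro j hj; obtain ⟨h1, h2⟩ := hmem j hj
      show (1 - ω ^ j)⁻¹ = (1 - ω ^ (N - (N - j)))⁻¹
      congr 3
      omega
  have hdouble : ∑ j ∈ (range N).erase 0, ((1 - ω ^ j)⁻¹ + (1 - ω ^ (N - j))⁻¹)
      = ∑ j ∈ (range N).erase 0, (1 : ℂ) := by
    apply Finset.sum_congr rfl
    intro j hj
    obtain ⟨h1, h2⟩ := hmem j hj
    have hz1 : ω ^ j ≠ 1 := hne j h1 h2
    have hz0 : ω ^ j ≠ 0 := pow_ne_zero _ hω0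
    have hinv : ω ^ (N - j) = (ω ^ j)⁻¹ := by
      apply eq_inv_of_mul_eq_one_left
      rw [← pow_add, show N - j + j = N by omega, hΩ]
    rw [hinv]
    exact aux_pair hz0 hz1
  rw [Finset.sum_add_distrib, ← hswap] at hdouble
  have hcard : ∑ j ∈ (range N).erase 0, (1 : ℂ) = (N : ℂ) - 1 := by
    rw [Finset.sum_const, Finset.card_erase_of_mem (by simp [hN]), Finset.card_range]
    rw [nsmul_eq_mul, mul_one, Nat.cast_sub hN, Nat.cast_one]
  rw [hcard] at hdouble
  linear_combination hdouble / 2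

lemma aux_T {N : ℕ} (hN : 0 < N) {ω : ℂ} (hω0 : ω ≠ 0)
    (hΩ : ω ^ N = 1) (hne : ∀ j : ℕ, 0 < j → j < N → ω ^ j ≠ 1) :
    ∀ r : ℕ, r < N →
      ∑ j ∈ (range N).erase 0, ω ^ (-(r : ℤ) * (j : ℤ)) / (1 - ω ^ j)
        = ((N : ℂ) - 1) / 2 - r := by
  intro r
  induction r with
  | zero =>
    intro _
    simp only [Nat.cast_zero, neg_zero, zero_mul, zpow_zero, sub_zero]
    rw [← aux_base hN hω0 hΩ hne]
    exact Finset.sum_congr rfl fun j _ => one_div _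
  | succ r ih =>
    intro hr'
    have hr : r < N := Nat.lt_of_succ_lt hr'
    simp only [Nat.cast_add, Nat.cast_one, neg_add]
    set x : ℂ := ω ^ (-((r : ℤ) + 1)) with hx
    have hxj : ∀ j : ℕ, x ^ j = ω ^ (-((r : ℤ) + 1) * (j : ℤ)) := by
      intro j
      rw [hx, ← zpow_natCast (ω ^ (-((r : ℤ) + 1))) j, ← zpow_mul]
    have hsplit : ∑ j ∈ (range N).erase 0, ω ^ ((-(r : ℤ) + -1) * (j : ℤ)) / (1 - ω ^ j)
        = ∑ j ∈ (range N).erase 0, (ω ^ (-(r : ℤ) * (j : ℤ)) / (1 - ω ^ j) + x ^ j) := by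
      apply Finset.sum_congr rfl
      intro j hj
      simp only [mem_erase, mem_range] at hj
      have hd : (1 : ℂ) - ω ^ j ≠ 0 := sub_ne_zero.mpr (Ne.symm (hne j (by omega) hj.2))
      have hmul : ω ^ (-((r : ℤ) + 1) * (j : ℤ)) * ω ^ j = ω ^ (-(r : ℤ) * (j : ℤ)) := by
        rw [← zpow_natCast ω j, ← zpow_add₀ hω0]; congr 1; ring
      rw [hxj j, div_add' _ _ _ hd, show (-(r : ℤ) + -1) = -((r:ℤ)+1) by ring]
      congr 1
      linear_combination hmul
    rw [hsplit, Finset.sum_add_distrib]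
    have hx1 : x ≠ 1 := by
      intro h
      apply hne (r + 1) (by omega) hr'
      have h2 : ω ^ ((r : ℤ) + 1) = 1 := by
        have hm : ω ^ (-((r : ℤ) + 1)) * ω ^ ((r : ℤ) + 1) = 1 := by
          rw [← zpow_add₀ hω0, show -((r:ℤ)+1) + ((r:ℤ)+1) = 0 by ring, zpow_zero]
        rw [← hx, h, one_mul] at hm
        exact hm
      rw [← zpow_natCast]
      push_cast
      exact h2
    have hxN : x ^ N = 1 := by
      rw [hxj N, show (-((r : ℤ) + 1) * (N : ℤ)) = (N : ℤ) * (-((r : ℤ) + 1)) by ring,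
        zpow_mul, zpow_natCast, hΩ, one_zpow]
    have hgeom : ∑ j ∈ range N, x ^ j = 0 := by
      rw [geom_sum_eq hx1, hxN, sub_self, zero_div]
    have herase : ∑ j ∈ (range N).erase 0, x ^ j = -1 := by
      rw [Finset.sum_erase_eq_sub (by simp [hN]), hgeom, pow_zero]
      ring
    rw [herase, ih hr]

    ring

theorem stmt_1 (N : ℕ) (hN : 0 < N) (p : ℤ) (k : ℕ) (hk1 : 1 ≤ k) (hk2 : k ≤ N)
    (ω : ℂ) (hω : ω = Complex.exp (2 * Real.pi * Complex.I / N))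
    (a : ℂ) (ha : a = ω ^ (-((k : ℤ) - 1))) :
    ∑ i ∈ (Finset.range N).erase (k - 1), ω ^ (-(p * (i : ℤ))) / (1 - a * ω ^ i)
      = (((N : ℂ) - 1) / 2 - ((p % (N : ℤ) : ℤ) : ℂ)) * a ^ (p % (N : ℤ)).toNat := by
  have hprim : IsPrimitiveRoot ω N := hω ▸ Complex.isPrimitiveRoot_exp N hN.ne'
  have hω0 : ω ≠ 0 := hω ▸ Complex.exp_ne_zero _
  have hΩ : ω ^ N = 1 := hprim.pow_eq_one
  have hΩz : ω ^ (N : ℤ) = 1 := by rw [zpow_natCast]; exact hΩ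
  have hne : ∀ j : ℕ, 0 < j → j < N → ω ^ j ≠ 1 := fun j h1 h2 =>
    hprim.pow_ne_one_of_pos_of_lt h1.ne' h2
  set K : ℕ := k - 1 with hK
  have hKk : (K : ℤ) = (k : ℤ) - 1 := by push_cast [hK]; omega
  have hKN : K < N := by omega
  have haK : a = ω ^ (-(K : ℤ)) := by rw [ha, hKk]
  set r : ℕ := (p % (N : ℤ)).toNat with hrdef
  have hm1 : 0 ≤ p % (N : ℤ) := Int.emod_nonneg p (by exact_mod_cast hN.ne')
  have hm2 : p % (N : ℤ) < N := Int.emod_lt_of_pos p (by exact_mod_cast hN)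
  have hrN : r < N := by omega
  have hrz : (r : ℤ) = p % (N : ℤ) := by omega
  have hpr : p ≡ (r : ℤ) [ZMOD (N : ℤ)] := by
    rw [hrz]
    exact (Int.emod_emod_of_dvd p dvd_rfl).symm
  have hbij : ∑ i ∈ (range N).erase K, ω ^ (-(p * (i : ℤ))) / (1 - a * ω ^ i)
      = ∑ j ∈ (range N).erase 0,
          ω ^ (-(K : ℤ) * p) * (ω ^ (-(r : ℤ) * (j : ℤ)) / (1 - ω ^ j)) := by
    symm
    apply Finset.sum_nbij' (fun j => (j + K) % N) (fun i => (i + (N - K)) % N)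
    · intro j hj
      simp only [mem_erase, mem_range] at hj ⊢
      refine ⟨?_, Nat.mod_lt _ hN⟩
      rcases Nat.lt_or_ge (j + K) N with h | h
      · rw [Nat.mod_eq_of_lt h]; omega
      · rw [Nat.mod_eq_sub_mod h, Nat.mod_eq_of_lt (by omega)]; omega
    · intro i hi
      simp only [mem_erase, mem_range] at hi ⊢
      refine ⟨?_, Nat.mod_lt _ hN⟩
      rcases Nat.lt_or_ge (i + (N - K)) N with h | h
      · rw [Nat.mod_eq_of_lt h]; omega
      · rw [Nat.mod_eq_sub_mod h, Nat.mod_eq_of_lt (by omega)]; omega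
    · intro j hj
      simp only [mem_erase, mem_range] at hj
      show ((j + K) % N + (N - K)) % N = j
      rw [Nat.mod_add_mod, show j + K + (N - K) = j + N by omega,
        Nat.add_mod_right, Nat.mod_eq_of_lt hj.2]
    · intro i hi
      simp only [mem_erase, mem_range] at hi
      show ((i + (N - K)) % N + K) % N = i
      rw [Nat.mod_add_mod, show i + (N - K) + K = i + N by omega,
        Nat.add_mod_right, Nat.mod_eq_of_lt hi.2]
    · intro j hj
      simp only [mem_erase, mem_range] at hj
      set i : ℕ := (j + K) % N with hidef
      have hint : (i : ℤ) ≡ (j : ℤ) + (K : ℤ) [ZMOD (N : ℤ)] := by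
        have h1 : (i : ℤ) = ((j : ℤ) + (K : ℤ)) % (N : ℤ) := by
          rw [hidef]; push_cast [Int.natCast_mod]; ring_nf
        show (i : ℤ) % (N : ℤ) = ((j : ℤ) + (K : ℤ)) % (N : ℤ)
        rw [h1]
        exact Int.emod_emod_of_dvd _ dvd_rfl
      have hden : a * ω ^ i = ω ^ j := by
        have hc : (i : ℤ) - (K : ℤ) ≡ (j : ℤ) [ZMOD (N : ℤ)] := by
          simpa using hint.sub_right (K : ℤ)
        rw [haK, ← zpow_natCast ω i, ← zpow_add₀ hω0,
          show -(K : ℤ) + (i : ℤ) = (i : ℤ) - (K : ℤ) by ring,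
          aux_zpow_modEq hω0 hΩz hc, zpow_natCast]
      have hnum : ω ^ (-(p * (i : ℤ))) = ω ^ (-(K : ℤ) * p) * ω ^ (-(r : ℤ) * (j : ℤ)) := by
        have hc : -(p * (i : ℤ)) ≡ -(K : ℤ) * p + -(r : ℤ) * (j : ℤ) [ZMOD (N : ℤ)] := by
          calc -(p * (i : ℤ)) ≡ -(p * ((j : ℤ) + (K : ℤ))) [ZMOD (N : ℤ)] :=
                (hint.mul_left p).neg
            _ = -(K : ℤ) * p + -(p * (j : ℤ)) := by ring
            _ ≡ -(K : ℤ) * p + -((r : ℤ) * (j : ℤ)) [ZMOD (N : ℤ)] :=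
                Int.ModEq.add_left _ ((hpr.mul_right (j : ℤ)).neg)
            _ = -(K : ℤ) * p + -(r : ℤ) * (j : ℤ) := by ring
        rw [aux_zpow_modEq hω0 hΩz hc, zpow_add₀ hω0]
      rw [hden, hnum, mul_div_assoc]
  rw [hbij, ← Finset.mul_sum, aux_T hN hω0 hΩ hne r hrN]
  have hap : ω ^ (-(K : ℤ) * p) = a ^ r := by
    rw [haK, ← zpow_natCast (ω ^ (-(K : ℤ))) r, ← zpow_mul]
    exact aux_zpow_modEq hω0 hΩz (hpr.mul_left (-(K : ℤ)))
  have hcast : ((p % (N : ℤ) : ℤ) : ℂ) = (r : ℂ) := by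
    rw [← hrz]; push_cast; ring
  rw [hap, hcast]
  ring
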